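/- Let G be a simple graph on n vertices. Then mcut(G) ≤ (n/4)·s_Q(G), where s_Q(G) = q_1(G) - q_n(G) is the spread of the signless Laplacian matrix. -/

import Mathlib

open Finset Matrix BigOperators

set_option linter.unusedSectionVars false

variable {V : Type*} [Fintype V] [DecidableEq V]

/-- Number of edges of `G` with exactly one endpoint in `S` (each unordered edge counted once,
as the ordered pair going out of `S`). -/
def cutNum (G : SimpleGraph V) [DecidableRel G.Adj] (S : Finset V) : ℕ :=
  (Finset.univ.filter (fun p : V × V => G.Adj p.1 p.2 ∧ p.1 ∈ S ∧ p.2 ∉ S)).card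

/-- Number of edges of `G` with both endpoints in `S` or both outside `S`. -/
def cohNum (G : SimpleGraph V) [DecidableRel G.Adj] (S : Finset V) : ℕ :=
  G.edgeFinset.card - cutNum G S

/-- The maximum cut of `G`. -/
def mcut (G : SimpleGraph V) [DecidableRel G.Adj] : ℕ :=
  Finset.univ.sup (fun S : Finset V => cutNum G S)

/-- The ±1 partition vector of a vertex subset `S`. -/
def pvec (S : Finset V) : V → ℝ := fun v => if v ∈ S then 1 else -1

/-- The signless Laplacian matrix `Q = D + A` of a graph. -/
def signlessLap (G : SimpleGraph V) [DecidableRel G.Adj] : Matrix V V ℝ :=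
  G.degMatrix ℝ + G.adjMatrix ℝ

lemma isHermitian_adj (G : SimpleGraph V) [DecidableRel G.Adj] :
    (G.adjMatrix ℝ).IsHermitian := by
  rw [IsHermitian, conjTranspose_eq_transpose_of_trivial]
  exact SimpleGraph.isSymm_adjMatrix G

lemma isHermitian_lap (G : SimpleGraph V) [DecidableRel G.Adj] :
    (G.lapMatrix ℝ).IsHermitian := by
  rw [IsHermitian, conjTranspose_eq_transpose_of_trivial]
  exact SimpleGraph.isSymm_lapMatrix (R := ℝ) (G := G)

lemma isHermitian_signlessLap (G : SimpleGraph V) [DecidableRel G.Adj] :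
    (signlessLap G).IsHermitian := by
  rw [IsHermitian, conjTranspose_eq_transpose_of_trivial]
  exact (SimpleGraph.isSymm_degMatrix (R := ℝ) (G := G)).add (SimpleGraph.isSymm_adjMatrix G)

/-- The spanning subgraph of `G` consisting of the edges between `S` and its complement. -/
def crossGraph (G : SimpleGraph V) (S : Finset V) : SimpleGraph V where
  Adj u v := G.Adj u v ∧ ((u ∈ S) ↔ (v ∉ S))
  symm := ⟨fun u v h => ⟨h.1.symm, by tauto⟩⟩
  loopless := ⟨fun v h => G.loopless.irrefl v h.1⟩

/-- The spanning subgraph of `G` consisting of the edges inside `S` or inside its complement. -/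
def insideGraph (G : SimpleGraph V) (S : Finset V) : SimpleGraph V where
  Adj u v := G.Adj u v ∧ ((u ∈ S) ↔ (v ∈ S))
  symm := ⟨fun u v h => ⟨h.1.symm, h.2.symm⟩⟩
  loopless := ⟨fun v h => G.loopless.irrefl v h.1⟩

instance (G : SimpleGraph V) [DecidableRel G.Adj] (S : Finset V) :
    DecidableRel (crossGraph G S).Adj := fun u v => inferInstanceAs (Decidable (G.Adj u v ∧ ((u ∈ S) ↔ (v ∉ S))))

instance (G : SimpleGraph V) [DecidableRel G.Adj] (S : Finset V) :
    DecidableRel (insideGraph G S).Adj := fun u v => inferInstanceAs (Decidable (G.Adj u v ∧ ((u ∈ S) ↔ (v ∈ S))))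

/-- The second largest value (with multiplicity) of a finitely indexed family of reals. -/
noncomputable def secondLargest (f : V → ℝ) : ℝ :=
  (Multiset.sort (Finset.univ.val.map f) (· ≤ ·)).getD (Fintype.card V - 2) 0

/-- The join of two graphs: disjoint union plus all edges in between. -/
def joinGraph {α β : Type*} (H₁ : SimpleGraph α) (H₂ : SimpleGraph β) :
    SimpleGraph (α ⊕ β) where
  Adj x y :=
    match x, y with
    | Sum.inl u, Sum.inl v => H₁.Adj u v
    | Sum.inr u, Sum.inr v => H₂.Adj u v
    | Sum.inl _, Sum.inr _ => True
    | Sum.inr _, Sum.inl _ => True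
  symm := ⟨by rintro (u | u) (v | v) h <;> first | exact h.symm | trivial⟩
  loopless := ⟨by
    rintro (u | u) h
    · exact H₁.loopless.irrefl u h
    · exact H₂.loopless.irrefl u h⟩

instance {α β : Type*} (H₁ : SimpleGraph α) (H₂ : SimpleGraph β)
    [DecidableRel H₁.Adj] [DecidableRel H₂.Adj] :
    DecidableRel (joinGraph H₁ H₂).Adj := fun x y =>
  match x, y with
  | Sum.inl u, Sum.inl v => inferInstanceAs (Decidable (H₁.Adj u v))
  | Sum.inr u, Sum.inr v => inferInstanceAs (Decidable (H₂.Adj u v))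
  | Sum.inl _, Sum.inr _ => inferInstanceAs (Decidable True)
  | Sum.inr _, Sum.inl _ => inferInstanceAs (Decidable True)


lemma pvec_dot_self (S : Finset V) : pvec S ⬝ᵥ pvec S = (Fintype.card V : ℝ) := by
  simp only [dotProduct, pvec]
  have h : ∀ v : V, (if v ∈ S then (1:ℝ) else -1) * (if v ∈ S then (1:ℝ) else -1) = 1 := by
    intro v; split_ifs <;> norm_num
  rw [Finset.sum_congr rfl (fun v _ => h v)]
  simp [Finset.card_univ]

lemma rayleigh_bounds [Nonempty V] {A : Matrix V V ℝ} (hA : A.IsHermitian) (x : V → ℝ) :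
    (⨅ i, hA.eigenvalues i) * (x ⬝ᵥ x) ≤ x ⬝ᵥ (A *ᵥ x) ∧
      x ⬝ᵥ (A *ᵥ x) ≤ (⨆ i, hA.eigenvalues i) * (x ⬝ᵥ x) := by
  classical
  set U : Matrix V V ℝ := (hA.eigenvectorUnitary : Matrix V V ℝ) with hU
  set y : V → ℝ := Matrix.vecMul x U with hy
  have hstar : star U *ᵥ x = y := by
    rw [hy, Matrix.star_eq_conjTranspose, Matrix.conjTranspose_eq_transpose_of_trivial,
      Matrix.mulVec_transpose]
  have h1 : x ⬝ᵥ (A *ᵥ x) = ∑ i, hA.eigenvalues i * (y i)^2 := by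
    conv_lhs => rw [hA.spectral_theorem, Unitary.conjStarAlgAut_apply]
    rw [← Matrix.mulVec_mulVec, ← Matrix.mulVec_mulVec, hstar, Matrix.dotProduct_mulVec]
    simp only [dotProduct, Matrix.mulVec_diagonal, Function.comp_apply, RCLike.ofReal_real_eq_id,
      id_eq]
    exact Finset.sum_congr rfl fun i _ => by rw [hy]; ring
  have h2 : x ⬝ᵥ x = ∑ i, (y i)^2 := by
    have hUU : U * star U = 1 := Matrix.mem_unitaryGroup_iff.mp hA.eigenvectorUnitary.2
    have : x ⬝ᵥ x = x ⬝ᵥ ((U * star U) *ᵥ x) := by rw [hUU, Matrix.one_mulVec]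
    rw [this, ← Matrix.mulVec_mulVec, hstar, Matrix.dotProduct_mulVec]
    simp [dotProduct, sq]
    rfl
  constructor
  · rw [h1, h2, Finset.mul_sum]
    refine Finset.sum_le_sum fun i _ => ?_
    exact mul_le_mul_of_nonneg_right (ciInf_le (Finite.bddBelow_range _) i) (sq_nonneg _)
  · rw [h1, h2, Finset.mul_sum]
    refine Finset.sum_le_sum fun i _ => ?_
    exact mul_le_mul_of_nonneg_right (le_ciSup (Finite.bddAbove_range _) i) (sq_nonneg _)

lemma quadform (G : SimpleGraph V) [DecidableRel G.Adj] (S : Finset V) :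
    pvec S ⬝ᵥ (signlessLap G *ᵥ pvec S)
      = 4 * (G.edgeFinset.card : ℝ) - 4 * (cutNum G S : ℝ) := by
  classical
  have hx2 : ∀ v, pvec S v * pvec S v = 1 := by
    intro v; unfold pvec; split_ifs <;> norm_num
  have hdeg : (∑ i : V, (G.degree i : ℝ)) = 2 * (G.edgeFinset.card : ℝ) := by
    have := congrArg (fun n : ℕ => (n : ℝ)) G.sum_degrees_eq_twice_card_edges
    push_cast at this
    exact this
  have hcut : (cutNum G S : ℝ)
      = ∑ i : V, ∑ j : V, (if G.Adj i j ∧ i ∈ S ∧ j ∉ S then (1:ℝ) else 0) := by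
    rw [cutNum, Finset.card_filter]
    push_cast
    rw [← Finset.univ_product_univ, Finset.sum_product]
  have hcut2 : (cutNum G S : ℝ)
      = ∑ i : V, ∑ j : V, (if G.Adj i j ∧ j ∈ S ∧ i ∉ S then (1:ℝ) else 0) := by
    rw [hcut, Finset.sum_comm]
    refine Finset.sum_congr rfl fun a _ => Finset.sum_congr rfl fun b _ => ?_
    refine if_congr ?_ rfl rfl
    rw [G.adj_comm]
  have hsum2 : (∑ i : V, ∑ j : V, (if G.Adj i j then (1:ℝ) else 0))
      = 2 * (G.edgeFinset.card : ℝ) := by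
    simp_rw [← SimpleGraph.degree_eq_sum_if_adj]
    exact hdeg
  have key : ∀ i j, (if G.Adj i j then pvec S i * pvec S j else 0)
      = (if G.Adj i j then (1:ℝ) else 0)
        - 2 * (if G.Adj i j ∧ i ∈ S ∧ j ∉ S then (1:ℝ) else 0)
        - 2 * (if G.Adj i j ∧ j ∈ S ∧ i ∉ S then (1:ℝ) else 0) := by
    intro i j; unfold pvec
    by_cases h : G.Adj i j <;> by_cases hi : i ∈ S <;> by_cases hj : j ∈ S <;>
      simp [h, hi, hj] <;> norm_num
  have t2 : (∑ i : V, ∑ j : V, (if G.Adj i j then pvec S i * pvec S j else 0))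
      = 2 * (G.edgeFinset.card : ℝ) - 4 * (cutNum G S : ℝ) := by
    calc (∑ i : V, ∑ j : V, (if G.Adj i j then pvec S i * pvec S j else 0))
        = ∑ i : V, ∑ j : V, ((if G.Adj i j then (1:ℝ) else 0)
            - 2 * (if G.Adj i j ∧ i ∈ S ∧ j ∉ S then (1:ℝ) else 0)
            - 2 * (if G.Adj i j ∧ j ∈ S ∧ i ∉ S then (1:ℝ) else 0)) := by
          simp_rw [key]
      _ = (∑ i : V, ∑ j : V, (if G.Adj i j then (1:ℝ) else 0))
            - 2 * (∑ i : V, ∑ j : V, (if G.Adj i j ∧ i ∈ S ∧ j ∉ S then (1:ℝ) else 0))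
            - 2 * (∑ i : V, ∑ j : V, (if G.Adj i j ∧ j ∈ S ∧ i ∉ S then (1:ℝ) else 0)) := by
          simp_rw [Finset.sum_sub_distrib, Finset.mul_sum]
      _ = 2 * (G.edgeFinset.card : ℝ) - 4 * (cutNum G S : ℝ) := by
          rw [← hcut, ← hcut2, hsum2]; ring
  have t1 : (∑ i : V, (G.degree i : ℝ) * pvec S i * pvec S i) = ∑ i : V, (G.degree i : ℝ) := by
    refine Finset.sum_congr rfl fun i _ => ?_
    rw [mul_assoc, hx2, mul_one]
  rw [signlessLap, Matrix.add_mulVec, dotProduct_add, SimpleGraph.dotProduct_mulVec_degMatrix,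
    SimpleGraph.dotProduct_mulVec_adjMatrix, t1, t2, hdeg]
  ring

lemma cutNum_univ (G : SimpleGraph V) [DecidableRel G.Adj] :
    cutNum G (Finset.univ : Finset V) = 0 := by
  rw [cutNum, Finset.card_eq_zero, Finset.filter_eq_empty_iff]
  intro p _
  simp

/-- `mcut(G) ≤ (n/4)·s_Q(G)` where `s_Q` is the signless Laplacian spread. -/
theorem stmt6 (G : SimpleGraph V) [DecidableRel G.Adj] :
    (mcut G : ℝ) ≤ (Fintype.card V : ℝ) / 4 * ((⨆ i, (isHermitian_signlessLap G).eigenvalues i) - (⨅ i, (isHermitian_signlessLap G).eigenvalues i)) := by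
  classical
  obtain ⟨S, -, hS⟩ := Finset.exists_mem_eq_sup (Finset.univ : Finset (Finset V))
    ⟨∅, Finset.mem_univ ∅⟩ (fun S : Finset V => cutNum G S)
  rw [mcut, hS]
  cases isEmpty_or_nonempty V with
  | inl h =>
    have : cutNum G S = 0 := by
      rw [cutNum, Finset.card_eq_zero, Finset.univ_eq_empty, Finset.filter_empty]
    rw [this]
    simp
  | inr h =>
    have hQ := isHermitian_signlessLap G
    have hb1 := (rayleigh_bounds hQ (pvec (Finset.univ : Finset V))).2
    have hb2 := (rayleigh_bounds hQ (pvec S)).1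
    rw [pvec_dot_self, quadform] at hb1 hb2
    rw [cutNum_univ] at hb1
    push_cast at hb1
    have hn : (0:ℝ) ≤ (Fintype.card V : ℝ) := Nat.cast_nonneg _
    nlinarith [hb1, hb2]
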